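/- Let A = L̄ E Ū as above with L̄ invertible lower triangular, Ū invertible upper triangular, E a 0-1 matrix with at most one 1 per row and column. Then for every k ≤ m and t ≤ n, the rank of the leading k×t submatrix of A equals the number of 1-entries of E located in positions (i,j) with i ≤ k and j ≤ t. -/

import Mathlib

open Matrix

lemma sum_castLE_aux {M : Type*} [AddCommMonoid M] {m k : ℕ} (h : k ≤ m) (f : Fin m → M)
    (hf : ∀ p : Fin m, k ≤ (p : ℕ) → f p = 0) :
    ∑ p : Fin m, f p = ∑ p : Fin k, f (Fin.castLE h p) := by
  have h1 : ∑ p ∈ Finset.univ.map (Fin.castLEEmb h), f p =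
      ∑ p : Fin k, f (Fin.castLE h p) := Finset.sum_map _ _ _
  rw [← h1]
  symm
  apply Finset.sum_subset (Finset.subset_univ _)
  intro p _ hp
  apply hf
  by_contra hlt
  push_neg at hlt
  exact hp (Finset.mem_map.mpr ⟨⟨(p : ℕ), hlt⟩, Finset.mem_univ _, rfl⟩)

lemma isUnit_det_leading_lower {F : Type*} [Field F] {m k : ℕ} (hk : k ≤ m)
    (L : Matrix (Fin m) (Fin m) F) (hLtri : ∀ i j : Fin m, i < j → L i j = 0)
    (hL : IsUnit L) :
    IsUnit (L.submatrix (Fin.castLE hk) (Fin.castLE hk)).det := by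
  have hdetL : IsUnit L.det := (Matrix.isUnit_iff_isUnit_det L).mp hL
  have htriL : L.BlockTriangular OrderDual.toDual := fun i j hij => hLtri _ _ hij
  rw [Matrix.det_of_lowerTriangular L htriL] at hdetL
  have htri : (L.submatrix (Fin.castLE hk) (Fin.castLE hk)).BlockTriangular OrderDual.toDual := by
    intro i j hij
    have hij' : i < j := hij
    exact hLtri _ _ hij'
  rw [Matrix.det_of_lowerTriangular _ htri]
  rw [isUnit_iff_ne_zero, Finset.prod_ne_zero_iff] at hdetL ⊢
  intro i _
  exact hdetL _ (Finset.mem_univ _)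

lemma isUnit_det_leading_upper {F : Type*} [Field F] {n t : ℕ} (ht : t ≤ n)
    (U : Matrix (Fin n) (Fin n) F) (hUtri : ∀ i j : Fin n, j < i → U i j = 0)
    (hU : IsUnit U) :
    IsUnit (U.submatrix (Fin.castLE ht) (Fin.castLE ht)).det := by
  have hdetU : IsUnit U.det := (Matrix.isUnit_iff_isUnit_det U).mp hU
  have htriU : U.BlockTriangular id := fun i j hij => hUtri _ _ hij
  rw [Matrix.det_of_upperTriangular htriU] at hdetU
  have htri : (U.submatrix (Fin.castLE ht) (Fin.castLE ht)).BlockTriangular id := by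
    intro i j hij
    have hij' : j < i := hij
    exact hUtri _ _ hij'
  rw [Matrix.det_of_upperTriangular htri]
  rw [isUnit_iff_ne_zero, Finset.prod_ne_zero_iff] at hdetU ⊢
  intro i _
  exact hdetU _ (Finset.mem_univ _)

open scoped Classical in
/-- A matrix with at most one nonzero entry per row and per column has rank
equal to the number of its nonzero entries. -/
lemma rank_partialPerm {F : Type*} [Field F] {k t : ℕ} (M : Matrix (Fin k) (Fin t) F)
    (hrow : ∀ (i : Fin k) (j j' : Fin t), M i j ≠ 0 → M i j' ≠ 0 → j = j')
    (hcol : ∀ (j : Fin t) (i i' : Fin k), M i j ≠ 0 → M i' j ≠ 0 → i = i') :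
    M.rank = (Finset.univ.filter fun p : Fin k × Fin t => M p.1 p.2 ≠ 0).card := by
  set S : Finset (Fin t) := Finset.univ.filter fun j => ∃ i, M i j ≠ 0 with hS
  have hmemS : ∀ j : Fin t, j ∈ S ↔ ∃ i, M i j ≠ 0 := by
    intro j; simp [hS]
  -- pick the row of each nonzero column
  have hchoice : ∀ j : S, ∃ i, M i (j : Fin t) ≠ 0 := fun j => (hmemS j).mp j.2
  choose r hr using hchoice
  -- the nonzero columns, as vectors
  set v : S → (Fin k → F) := fun j => Mᵀ (j : Fin t) with hv
  have hli : LinearIndependent F v := by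
    rw [Fintype.linearIndependent_iff]
    intro g hg j0
    have := congrFun hg (r j0)
    simp only [Finset.sum_apply, Pi.smul_apply, Pi.zero_apply, smul_eq_mul, hv,
      Matrix.transpose_apply] at this
    rw [Finset.sum_eq_single j0] at this
    · exact (mul_eq_zero.mp this).resolve_right (hr j0)
    · intro j _ hne
      have hz : M (r j0) (j : Fin t) = 0 := by
        by_contra hnz
        exact hne (Subtype.ext (hrow _ _ _ hnz (hr j0)))
      rw [hz, mul_zero]
    · intro h; exact absurd (Finset.mem_univ j0) h
  have hspan : Submodule.span F (Set.range Mᵀ) = Submodule.span F (Set.range v) := by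
    apply le_antisymm
    · rw [Submodule.span_le]
      rintro _ ⟨j, rfl⟩
      by_cases hj : j ∈ S
      · exact Submodule.subset_span ⟨⟨j, hj⟩, rfl⟩
      · have : Mᵀ j = 0 := by
          funext i
          by_contra hnz
          exact hj ((hmemS j).mpr ⟨i, hnz⟩)
        rw [this]
        exact Submodule.zero_mem _
    · rw [Submodule.span_le]
      rintro _ ⟨j, rfl⟩
      exact Submodule.subset_span ⟨(j : Fin t), rfl⟩
  rw [Matrix.rank_eq_finrank_span_cols, (show M.col = Mᵀ from rfl), hspan, finrank_span_eq_card hli, Fintype.card_coe]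
  -- now count
  symm
  apply Finset.card_bij (i := fun p _ => p.2)
  · intro p hp
    simp only [Finset.mem_filter, Finset.mem_univ, true_and] at hp
    exact (hmemS p.2).mpr ⟨p.1, hp⟩
  · intro p hp q hq hpq
    simp only [Finset.mem_filter, Finset.mem_univ, true_and] at hp hq
    have hq' : M q.1 p.2 ≠ 0 := by rw [hpq]; exact hq
    exact Prod.ext (hcol p.2 p.1 q.1 hp hq') hpq
  · intro j hj
    obtain ⟨i, hi⟩ := (hmemS j).mp hj
    exact ⟨(i, j), by simp [hi], rfl⟩

open scoped Classical in
theorem rank_leading_submatrix_of_LEU (F : Type*) [Field F] {m n : ℕ}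
    (A : Matrix (Fin m) (Fin n) F)
    (L : Matrix (Fin m) (Fin m) F) (E : Matrix (Fin m) (Fin n) F)
    (U : Matrix (Fin n) (Fin n) F)
    (hLtri : ∀ i j : Fin m, i < j → L i j = 0) (hL : IsUnit L)
    (hUtri : ∀ i j : Fin n, j < i → U i j = 0) (hU : IsUnit U)
    (hE01 : ∀ (i : Fin m) (j : Fin n), E i j = 0 ∨ E i j = 1)
    (hErow : ∀ (i : Fin m) (j j' : Fin n), E i j ≠ 0 → E i j' ≠ 0 → j = j')
    (hEcol : ∀ (j : Fin n) (i i' : Fin m), E i j ≠ 0 → E i' j ≠ 0 → i = i')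
    (hA : A = L * E * U) :
    ∀ (k t : ℕ) (hk : k ≤ m) (ht : t ≤ n),
      (A.submatrix (Fin.castLE hk) (Fin.castLE ht)).rank =
      (Finset.univ.filter fun p : Fin m × Fin n =>
        E p.1 p.2 ≠ 0 ∧ (p.1 : ℕ) < k ∧ (p.2 : ℕ) < t).card := by
  intro k t hk ht
  set Lk := L.submatrix (Fin.castLE hk) (Fin.castLE hk) with hLk
  set Ek := E.submatrix (Fin.castLE hk) (Fin.castLE ht) with hEk
  set Ut := U.submatrix (Fin.castLE ht) (Fin.castLE ht) with hUt
  have hfact : A.submatrix (Fin.castLE hk) (Fin.castLE ht) = Lk * Ek * Ut := by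
    subst hA
    ext i j
    simp only [Matrix.submatrix_apply, Matrix.mul_apply, hLk, hEk, hUt]
    rw [sum_castLE_aux ht
      (f := fun q => (∑ p, L (Fin.castLE hk i) p * E p q) * U q (Fin.castLE ht j))
      (by
        intro q hq
        have hz : U q (Fin.castLE ht j) = 0 :=
          hUtri _ _ (show Fin.castLE ht j < q from Nat.lt_of_lt_of_le j.isLt hq)
        simp only [hz, mul_zero])]
    apply Finset.sum_congr rfl
    intro q _
    congr 1
    exact sum_castLE_aux hk (f := fun p => L (Fin.castLE hk i) p * E p (Fin.castLE ht q))
      (by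
        intro p hp
        have hz : L (Fin.castLE hk i) p = 0 :=
          hLtri _ _ (show Fin.castLE hk i < p from Nat.lt_of_lt_of_le i.isLt hp)
        simp only [hz, zero_mul])
  have hUdet := isUnit_det_leading_upper ht U hUtri hU
  have hLdet := isUnit_det_leading_lower hk L hLtri hL
  rw [hfact, Matrix.rank_mul_eq_left_of_isUnit_det Ut (Lk * Ek) hUdet,
    Matrix.rank_mul_eq_right_of_isUnit_det Lk Ek hLdet]
  rw [rank_partialPerm Ek
    (fun i j j' h h' => Fin.castLE_injective ht (hErow _ _ _ h h'))
    (fun j i i' h h' => Fin.castLE_injective hk (hEcol _ _ _ h h'))]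
  apply Finset.card_bij (i := fun p _ => ((Fin.castLE hk p.1 : Fin m), (Fin.castLE ht p.2 : Fin n)))
  · intro p hp
    simp only [Finset.mem_filter, Finset.mem_univ, true_and] at hp ⊢
    exact ⟨hp, p.1.isLt, p.2.isLt⟩
  · intro p hp q hq hpq
    have h1 := congrArg Prod.fst hpq
    have h2 := congrArg Prod.snd hpq
    simp only at h1 h2
    exact Prod.ext (Fin.castLE_injective hk h1) (Fin.castLE_injective ht h2)
  · intro q hq
    simp only [Finset.mem_filter, Finset.mem_univ, true_and] at hq
    obtain ⟨hne, h1, h2⟩ := hq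
    refine ⟨(⟨(q.1 : ℕ), h1⟩, ⟨(q.2 : ℕ), h2⟩), ?_, ?_⟩
    · simp only [Finset.mem_filter, Finset.mem_univ, true_and, hEk,
        Matrix.submatrix_apply]
      convert hne <;> ext <;> rfl
    · ext <;> rfl
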